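/- Let X be an m × p matrix (m ≤ p) with rows of unit norm and σ_m(X) > 0, W a p × p orthogonal matrix, Ŵ a p × p matrix with ΔW = Ŵ − W, Π an m × m matrix with each row of ΠX of unit norm, U an m × p matrix, and Y = Π X W + U. Then the least-squares estimate Π̃ = Y Ŵ^T X^T (X X^T)^{−1} satisfies ||Π̃ − Π||_F ≤ σ_m(X)^{−1}( ||U||_F (1 + ||ΔW||_F) + √m ||ΔW||_F ). -/

import Mathlib

open Matrix

/-- Euclidean norm of a vector in `ℝ^k` given as a function. -/
noncomputable def vecNorm {k : ℕ} (v : Fin k → ℝ) : ℝ := Real.sqrt (∑ i, v i ^ 2)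

/-- Frobenius norm of a real matrix. -/
noncomputable def frobNorm {a b : ℕ} (M : Matrix (Fin a) (Fin b) ℝ) : ℝ :=
  Real.sqrt (∑ i, ∑ j, M i j ^ 2)

/-- The smallest singular value `σ_m(X)` of an `m × p` real matrix: the square
root of the smallest eigenvalue of `X Xᵀ`. -/
noncomputable def sigmaMin {m p : ℕ} (X : Matrix (Fin m) (Fin p) ℝ) : ℝ :=
  Real.sqrt (⨅ i, (Matrix.isHermitian_mul_conjTranspose_self X).eigenvalues i)

namespace OLSAux

attribute [local instance] Matrix.frobeniusNormedAddCommGroup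

lemma frobNorm_eq_norm {a b : ℕ} (M : Matrix (Fin a) (Fin b) ℝ) : frobNorm M = ‖M‖ := by
  rw [Matrix.frobenius_norm_def, frobNorm, Real.sqrt_eq_rpow]
  congr 1
  refine Finset.sum_congr rfl fun i _ => Finset.sum_congr rfl fun j _ => ?_
  rw [Real.rpow_two, Real.norm_eq_abs, sq_abs]

lemma frobNorm_nonneg {a b : ℕ} (M : Matrix (Fin a) (Fin b) ℝ) : 0 ≤ frobNorm M :=
  Real.sqrt_nonneg _

lemma frobNorm_add_le {a b : ℕ} (A B : Matrix (Fin a) (Fin b) ℝ) :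
    frobNorm (A + B) ≤ frobNorm A + frobNorm B := by
  simp only [frobNorm_eq_norm]; exact norm_add_le _ _

lemma frobNorm_mul_le {a b c : ℕ} (A : Matrix (Fin a) (Fin b) ℝ) (B : Matrix (Fin b) (Fin c) ℝ) :
    frobNorm (A * B) ≤ frobNorm A * frobNorm B := by
  simp only [frobNorm_eq_norm]; exact Matrix.frobenius_norm_mul A B

lemma frobNorm_transpose {a b : ℕ} (M : Matrix (Fin a) (Fin b) ℝ) : frobNorm Mᵀ = frobNorm M := by
  simp only [frobNorm_eq_norm]; exact Matrix.frobenius_norm_transpose M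

lemma sum_sq_eq_trace {a b : ℕ} (M : Matrix (Fin a) (Fin b) ℝ) :
    ∑ i, ∑ j, M i j ^ 2 = Matrix.trace (M * Mᵀ) := by
  simp [Matrix.trace, Matrix.mul_apply, sq, Matrix.diag]

lemma frobNorm_mul_orth {a b : ℕ} (A : Matrix (Fin a) (Fin b) ℝ) (B : Matrix (Fin b) (Fin b) ℝ)
    (hB : B * Bᵀ = 1) : frobNorm (A * B) = frobNorm A := by
  rw [frobNorm, frobNorm, sum_sq_eq_trace, sum_sq_eq_trace]
  rw [Matrix.transpose_mul, show A * B * (Bᵀ * Aᵀ) = A * (B * Bᵀ) * Aᵀ by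
    simp only [Matrix.mul_assoc], hB, Matrix.mul_one]

lemma frobNorm_unit_rows {a b : ℕ} (A : Matrix (Fin a) (Fin b) ℝ)
    (h : ∀ i, vecNorm (A i) = 1) : frobNorm A = Real.sqrt a := by
  rw [frobNorm]
  congr 1
  have hs : ∀ i, ∑ j, A i j ^ 2 = 1 := by
    intro i
    have h1 := h i
    rw [vecNorm] at h1
    have h0 : (0:ℝ) ≤ ∑ j, A i j ^ 2 := Finset.sum_nonneg fun j _ => sq_nonneg _
    nlinarith [Real.sq_sqrt h0]
  simp [hs]

lemma rayleigh_lower {n : ℕ} (A : Matrix (Fin n) (Fin n) ℝ) (hA : A.IsHermitian)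
    (u : Fin n → ℝ) :
    (⨅ i, hA.eigenvalues i) * (u ⬝ᵥ u) ≤ u ⬝ᵥ (A *ᵥ u) := by
  rcases isEmpty_or_nonempty (Fin n) with he | he
  · simp [dotProduct]
  set V : Matrix (Fin n) (Fin n) ℝ := (hA.eigenvectorUnitary : Matrix (Fin n) (Fin n) ℝ) with hV
  have hVV : V * star V = 1 := (Matrix.mem_unitaryGroup_iff).mp (hA.eigenvectorUnitary).2
  set c : Fin n → ℝ := (star V) *ᵥ u with hc
  have hstar : (star V)ᵀ = V := by
    ext i j; simp [Matrix.star_eq_conjTranspose, Matrix.conjTranspose_apply]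
  have hdot2 : u ⬝ᵥ u = c ⬝ᵥ c := by
    rw [hc, Matrix.dotProduct_mulVec, ← Matrix.mulVec_transpose, hstar,
      Matrix.mulVec_mulVec, hVV, Matrix.one_mulVec]
  have hdot1 : u ⬝ᵥ (A *ᵥ u) = ∑ i, hA.eigenvalues i * c i ^ 2 := by
    conv_lhs => rw [hA.spectral_theorem, Unitary.conjStarAlgAut_apply]
    have hstar2 : Vᵀ = star V := by
      ext i j; simp [Matrix.star_eq_conjTranspose, Matrix.conjTranspose_apply]
    rw [← Matrix.mulVec_mulVec, ← Matrix.mulVec_mulVec, Matrix.dotProduct_mulVec,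
      ← Matrix.mulVec_transpose, hstar2]
    simp only [← hc]
    simp only [dotProduct, Matrix.mulVec_diagonal, Function.comp]
    refine Finset.sum_congr rfl fun i _ => ?_
    simp [sq]; ring
  rw [hdot1, hdot2]
  have hmul : (⨅ i, hA.eigenvalues i) * (c ⬝ᵥ c) = ∑ i, (⨅ i, hA.eigenvalues i) * c i ^ 2 := by
    rw [dotProduct, Finset.mul_sum]; ring_nf
  rw [hmul]
  exact Finset.sum_le_sum fun i _ =>
    mul_le_mul_of_nonneg_right (ciInf_le (Set.Finite.bddBelow (Set.finite_range _)) i)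
      (sq_nonneg _)

lemma dps_nonneg {k : ℕ} (x : Fin k → ℝ) : 0 ≤ x ⬝ᵥ x :=
  Finset.sum_nonneg fun _ _ => mul_self_nonneg _

variable {m p : ℕ} (X : Matrix (Fin m) (Fin p) ℝ)

lemma conjT_eq_T {a b : ℕ} (M : Matrix (Fin a) (Fin b) ℝ) : Mᴴ = Mᵀ := by
  ext i j; simp [Matrix.conjTranspose_apply]

lemma hermXXT : (X * Xᵀ).IsHermitian := by
  rw [← conjT_eq_T X]; exact Matrix.isHermitian_mul_conjTranspose_self X

lemma rayleighX (u : Fin m → ℝ) :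
    (⨅ i, (Matrix.isHermitian_mul_conjTranspose_self X).eigenvalues i) * (u ⬝ᵥ u)
      ≤ u ⬝ᵥ ((X * Xᵀ) *ᵥ u) := by
  have h := rayleigh_lower (X * Xᴴ) (Matrix.isHermitian_mul_conjTranspose_self X) u
  have h2 : u ⬝ᵥ ((X * Xᴴ) *ᵥ u) = u ⬝ᵥ ((X * Xᵀ) *ᵥ u) := by rw [conjT_eq_T]
  linarith

lemma lam_pos (hσ : 0 < sigmaMin X) :
    0 < ⨅ i, (Matrix.isHermitian_mul_conjTranspose_self X).eigenvalues i :=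
  Real.sqrt_pos.mp hσ

lemma key_posdef (hσ : 0 < sigmaMin X) : (X * Xᵀ).PosDef := by
  refine posDef_iff_dotProduct_mulVec.mpr ⟨hermXXT X, fun x hx => ?_⟩
  have h := rayleighX X x
  have hx2 : 0 < x ⬝ᵥ x := by
    rcases (dps_nonneg x).lt_or_eq with h' | h'
    · exact h'
    · exact absurd ((dotProduct_self_eq_zero).mp h'.symm) hx
  have hl := lam_pos X hσ
  have hst : star x = x := by simp
  rw [hst]
  nlinarith

lemma row_bound (hσ : 0 < sigmaMin X) (v : Fin p → ℝ) :
    ((X * Xᵀ)⁻¹ *ᵥ (X *ᵥ v)) ⬝ᵥ ((X * Xᵀ)⁻¹ *ᵥ (X *ᵥ v))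
      ≤ ((sigmaMin X)⁻¹) ^ 2 * (v ⬝ᵥ v) := by
  set u : Fin m → ℝ := (X * Xᵀ)⁻¹ *ᵥ (X *ᵥ v) with hu
  set A := X * Xᵀ with hAdef
  have hPD := key_posdef X hσ
  have hunit : IsUnit A := hPD.isUnit
  have hAAinv : A * A⁻¹ = 1 := Matrix.mul_nonsing_inv _ ((Matrix.isUnit_iff_isUnit_det _).mp hunit)
  have hAu : A *ᵥ u = X *ᵥ v := by
    rw [hu, Matrix.mulVec_mulVec, hAAinv, Matrix.one_mulVec]
  set q : ℝ := u ⬝ᵥ (A *ᵥ u) with hq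
  have hray := rayleighX X u
  have hl := lam_pos X hσ
  have hq1 : q = (Xᵀ *ᵥ u) ⬝ᵥ v := by
    rw [hq, hAu, Matrix.dotProduct_mulVec, ← Matrix.mulVec_transpose]
  have hXa : X *ᵥ (Xᵀ *ᵥ u) = X *ᵥ v := by rw [Matrix.mulVec_mulVec, ← hAdef, hAu]
  have hq2 : (Xᵀ *ᵥ u) ⬝ᵥ (Xᵀ *ᵥ u) = q := by
    rw [Matrix.dotProduct_mulVec, ← Matrix.mulVec_transpose, Matrix.transpose_transpose,
      hXa, hq1, dotProduct_comm, Matrix.dotProduct_mulVec, ← Matrix.mulVec_transpose]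
  have hCS : q ^ 2 ≤ q * (v ⬝ᵥ v) := by
    rw [hq1]
    calc ((Xᵀ *ᵥ u) ⬝ᵥ v) ^ 2 ≤ ((Xᵀ *ᵥ u) ⬝ᵥ (Xᵀ *ᵥ u)) * (v ⬝ᵥ v) := by
          simpa [dotProduct, sq] using
            Finset.sum_mul_sq_le_sq_mul_sq Finset.univ (fun j => (Xᵀ *ᵥ u) j) v
      _ = ((Xᵀ *ᵥ u) ⬝ᵥ v) * (v ⬝ᵥ v) := by rw [hq2, hq1]
  have hq0 : 0 ≤ q := le_trans (mul_nonneg hl.le (dps_nonneg u)) hray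
  have hqv : q ≤ v ⬝ᵥ v := by
    rcases hq0.lt_or_eq with h' | h'
    · nlinarith
    · rw [← h']; exact dps_nonneg v
  have huu : u ⬝ᵥ u ≤ (⨅ i, (Matrix.isHermitian_mul_conjTranspose_self X).eigenvalues i)⁻¹
      * (v ⬝ᵥ v) := by
    rw [le_inv_mul_iff₀ hl]
    exact le_trans hray hqv
  have hσ2 : ((sigmaMin X)⁻¹) ^ 2
      = (⨅ i, (Matrix.isHermitian_mul_conjTranspose_self X).eigenvalues i)⁻¹ := by
    rw [sigmaMin, inv_pow, Real.sq_sqrt hl.le]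
  rw [hσ2]; exact huu

lemma spectral_bound (hσ : 0 < sigmaMin X) (E : Matrix (Fin m) (Fin p) ℝ) :
    frobNorm (E * (Xᵀ * (X * Xᵀ)⁻¹)) ≤ (sigmaMin X)⁻¹ * frobNorm E := by
  have hσ0 : 0 ≤ (sigmaMin X)⁻¹ := inv_nonneg.mpr hσ.le
  have hAinvT : ((X * Xᵀ)⁻¹)ᵀ = (X * Xᵀ)⁻¹ := by
    rw [Matrix.transpose_nonsing_inv]
    congr 1
    rw [← conjT_eq_T (X * Xᵀ)]
    exact hermXXT X
  have hrowE : ∀ i, (E * (Xᵀ * (X * Xᵀ)⁻¹)) i = (X * Xᵀ)⁻¹ *ᵥ (X *ᵥ (E i)) := by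
    intro i
    funext j
    rw [Matrix.mulVec_mulVec]
    have h2 : ((X * Xᵀ)⁻¹ * X) = (Xᵀ * (X * Xᵀ)⁻¹)ᵀ := by
      rw [Matrix.transpose_mul, hAinvT, Matrix.transpose_transpose]
    rw [h2]
    simp [Matrix.mulVec, Matrix.mul_apply, dotProduct, mul_comm]
  have hsum : ∑ i, ∑ j, (E * (Xᵀ * (X * Xᵀ)⁻¹)) i j ^ 2
      ≤ ((sigmaMin X)⁻¹) ^ 2 * ∑ i, ∑ j, E i j ^ 2 := by
    rw [Finset.mul_sum]
    refine Finset.sum_le_sum fun i _ => ?_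
    have h1 : ∑ j, (E * (Xᵀ * (X * Xᵀ)⁻¹)) i j ^ 2
        = ((X * Xᵀ)⁻¹ *ᵥ (X *ᵥ (E i))) ⬝ᵥ ((X * Xᵀ)⁻¹ *ᵥ (X *ᵥ (E i))) := by
      rw [hrowE i]; simp [dotProduct, sq]
    have h2 : (E i) ⬝ᵥ (E i) = ∑ j, E i j ^ 2 := by simp [dotProduct, sq]
    rw [h1, ← h2]
    exact row_bound X hσ (E i)
  rw [frobNorm, frobNorm]
  calc Real.sqrt (∑ i, ∑ j, (E * (Xᵀ * (X * Xᵀ)⁻¹)) i j ^ 2)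
      ≤ Real.sqrt (((sigmaMin X)⁻¹) ^ 2 * ∑ i, ∑ j, E i j ^ 2) := Real.sqrt_le_sqrt hsum
    _ = (sigmaMin X)⁻¹ * Real.sqrt (∑ i, ∑ j, E i j ^ 2) := by
        rw [Real.sqrt_mul (sq_nonneg _), Real.sqrt_sq hσ0]

end OLSAux

open OLSAux

/-- Error bound for the least-squares mapping estimate: with `X` an `m × p`
matrix (`m ≤ p`) having unit-norm rows and `σ_m(X) > 0`, `W` orthogonal,
`ΔW = Ŵ − W`, `P` an `m × m` matrix with unit-norm rows of `P X`, `U` an `m × p`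
residual matrix, and `Y = P X W + U`, the estimate
`P̃ = Y Ŵᵀ Xᵀ (X Xᵀ)⁻¹` satisfies
`‖P̃ − P‖_F ≤ σ_m(X)⁻¹ (‖U‖_F (1 + ‖ΔW‖_F) + √m ‖ΔW‖_F)`. -/
theorem OLS_mapping_error_bound {m p : ℕ} (hmp : m ≤ p)
    (X : Matrix (Fin m) (Fin p) ℝ) (hrows : ∀ i, vecNorm (X i) = 1)
    (hσ : 0 < sigmaMin X)
    (W What : Matrix (Fin p) (Fin p) ℝ) (hW : W * Wᵀ = 1)
    (ΔW : Matrix (Fin p) (Fin p) ℝ) (hΔW : ΔW = What - W)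
    (P : Matrix (Fin m) (Fin m) ℝ) (hPX : ∀ i, vecNorm ((P * X) i) = 1)
    (U : Matrix (Fin m) (Fin p) ℝ)
    (Y : Matrix (Fin m) (Fin p) ℝ) (hY : Y = P * X * W + U)
    (Ptilde : Matrix (Fin m) (Fin m) ℝ)
    (hPtilde : Ptilde = Y * Whatᵀ * Xᵀ * (X * Xᵀ)⁻¹) :
    frobNorm (Ptilde - P) ≤
      (sigmaMin X)⁻¹ *
        (frobNorm U * (1 + frobNorm ΔW) + Real.sqrt m * frobNorm ΔW) := by
  have hσ0 : 0 ≤ (sigmaMin X)⁻¹ := inv_nonneg.mpr hσ.le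
  have hPD := key_posdef X hσ
  have hAAinv : (X * Xᵀ) * (X * Xᵀ)⁻¹ = 1 :=
    Matrix.mul_nonsing_inv _ ((Matrix.isUnit_iff_isUnit_det _).mp hPD.isUnit)
  have hXM : X * (Xᵀ * (X * Xᵀ)⁻¹) = 1 := by rw [← Matrix.mul_assoc, hAAinv]
  have hWhatT : Whatᵀ = Wᵀ + ΔWᵀ := by
    have : What = W + ΔW := by rw [hΔW]; abel
    rw [this, Matrix.transpose_add]
  have hWtW : Wᵀ * Wᵀᵀ = 1 := by
    rw [Matrix.transpose_transpose]
    exact mul_eq_one_comm.mp hW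
  set E := P * X * W * ΔWᵀ + U * Whatᵀ with hE
  have key : Ptilde - P = E * (Xᵀ * (X * Xᵀ)⁻¹) := by
    subst hPtilde hY
    have hc1 : W * (Wᵀ * (Xᵀ * (X * Xᵀ)⁻¹)) = Xᵀ * (X * Xᵀ)⁻¹ := by
      rw [← Matrix.mul_assoc, hW, Matrix.one_mul]
    rw [hE, hWhatT]
    simp only [Matrix.add_mul, Matrix.mul_add, Matrix.mul_assoc, hc1, hXM, Matrix.mul_one]
    abel
  have hEb : frobNorm E ≤ Real.sqrt m * frobNorm ΔW + (frobNorm U + frobNorm U * frobNorm ΔW) := by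
    rw [hE]
    refine le_trans (frobNorm_add_le _ _) (add_le_add ?_ ?_)
    · calc frobNorm (P * X * W * ΔWᵀ) ≤ frobNorm (P * X * W) * frobNorm ΔWᵀ :=
            frobNorm_mul_le _ _
        _ = Real.sqrt m * frobNorm ΔW := by
            rw [frobNorm_mul_orth (P * X) W hW, frobNorm_unit_rows _ hPX, frobNorm_transpose]
    · rw [hWhatT, Matrix.mul_add]
      refine le_trans (frobNorm_add_le _ _) (add_le_add ?_ ?_)
      · rw [frobNorm_mul_orth U Wᵀ hWtW]
      · calc frobNorm (U * ΔWᵀ) ≤ frobNorm U * frobNorm ΔWᵀ := frobNorm_mul_le _ _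
          _ = frobNorm U * frobNorm ΔW := by rw [frobNorm_transpose]
  calc frobNorm (Ptilde - P) = frobNorm (E * (Xᵀ * (X * Xᵀ)⁻¹)) := by rw [key]
    _ ≤ (sigmaMin X)⁻¹ * frobNorm E := spectral_bound X hσ E
    _ ≤ (sigmaMin X)⁻¹ *
        (Real.sqrt m * frobNorm ΔW + (frobNorm U + frobNorm U * frobNorm ΔW)) :=
          mul_le_mul_of_nonneg_left hEb hσ0
    _ = (sigmaMin X)⁻¹ *
        (frobNorm U * (1 + frobNorm ΔW) + Real.sqrt m * frobNorm ΔW) := by ring
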